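/- The anti-linear involution τ(X) = conj(X) on sl(3,ℂ) satisfies the relation σ̂ ∘ τ ∘ σ̂ = τ, where σ̂(X) = -P X^T P⁻¹ with P = diag(ε²,ε⁴,-1)·P₀. -/
import Mathlib


open Matrix Complex

noncomputable section

def ε : ℂ := Complex.exp (Real.pi * Complex.I / 3)

def P₀ : Matrix (Fin 3) (Fin 3) ℂ := !![0, 1, 0; 1, 0, 0; 0, 0, -1]

def Pmat : Matrix (Fin 3) (Fin 3) ℂ := Matrix.diagonal ![ε ^ 2, ε ^ 4, -1] * P₀

/-- `σ̂(X) = -P Xᵀ P⁻¹`. -/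
def sigmaHat (X : Matrix (Fin 3) (Fin 3) ℂ) : Matrix (Fin 3) (Fin 3) ℂ :=
  -(Pmat * Xᵀ * Pmat⁻¹)

/-- `τ(X) = conj(X)`, entrywise complex conjugation (split real form). -/
def tauS (X : Matrix (Fin 3) (Fin 3) ℂ) : Matrix (Fin 3) (Fin 3) ℂ :=
  X.map (starRingEnd ℂ)

lemma eps6 : ε ^ 6 = 1 := by
  rw [ε, ← Complex.exp_nat_mul]
  rw [show (6 : ℕ) * ((Real.pi : ℂ) * Complex.I / 3) = 2 * Real.pi * Complex.I by ring]
  exact Complex.exp_two_pi_mul_I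

lemma hPexp : Pmat = !![0, ε ^ 2, 0; ε ^ 4, 0, 0; 0, 0, 1] := by
  ext i j
  fin_cases i <;> fin_cases j <;>
    simp [Pmat, P₀, Matrix.mul_apply, Fin.sum_univ_three, Matrix.vecHead, Matrix.vecTail]

lemma hPP : Pmat * Pmat = 1 := by
  rw [hPexp]
  ext i j
  fin_cases i <;> fin_cases j <;>
    simp [Matrix.mul_apply, Fin.sum_univ_three, Matrix.one_apply, Matrix.vecHead,
      Matrix.vecTail] <;>
    first
      | rw [show ε ^ 2 * ε ^ 4 = ε ^ 6 by ring, eps6]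
      | rw [show ε ^ 4 * ε ^ 2 = ε ^ 6 by ring, eps6]

lemma hPinv : Pmat⁻¹ = Pmat := Matrix.inv_eq_right_inv hPP

lemma eps_ne : ε ≠ 0 := Complex.exp_ne_zero _

lemma conj_eps : (starRingEnd ℂ) ε = ε ^ 5 := by
  have h : (starRingEnd ℂ) ε * ε = 1 := by
    rw [ε, ← Complex.exp_conj, ← Complex.exp_add]
    rw [show (starRingEnd ℂ) ((Real.pi : ℂ) * Complex.I / 3) + (Real.pi : ℂ) * Complex.I / 3 = 0 by
      rw [map_div₀, _root_.map_mul, Complex.conj_ofReal, Complex.conj_I, map_ofNat]; ring]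
    exact Complex.exp_zero
  have h2 : ε ^ 5 * ε = 1 := by rw [show ε ^ 5 * ε = ε ^ 6 by ring, eps6]
  exact mul_right_cancel₀ eps_ne (h.trans h2.symm)

lemma conj_eps2 : (starRingEnd ℂ) (ε ^ 2) = ε ^ 4 := by
  rw [map_pow, conj_eps, show (ε ^ 5) ^ 2 = ε ^ 6 * ε ^ 4 by ring, eps6, one_mul]

lemma conj_eps4 : (starRingEnd ℂ) (ε ^ 4) = ε ^ 2 := by
  rw [map_pow, conj_eps, show (ε ^ 5) ^ 4 = (ε ^ 6) ^ 3 * ε ^ 2 by ring, eps6, one_pow, one_mul]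

lemma hmap : Pmat.map (starRingEnd ℂ) = Pmatᵀ := by
  rw [hPexp]
  ext i j
  fin_cases i <;> fin_cases j <;>
    simp [Matrix.vecHead, Matrix.vecTail, conj_eps2, conj_eps4]

lemma map_neg' (A : Matrix (Fin 3) (Fin 3) ℂ) :
    (-A).map (starRingEnd ℂ) = -(A.map (starRingEnd ℂ)) := by
  ext i j; simp [Matrix.map_apply, Matrix.neg_apply]

/-- The anti-linear involution `τ(X) = conj X` satisfies `σ̂ ∘ τ ∘ σ̂ = τ`. -/
theorem stmt3 : ∀ X : Matrix (Fin 3) (Fin 3) ℂ, sigmaHat (tauS (sigmaHat X)) = tauS X := by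
  intro X
  have key : ∀ Y : Matrix (Fin 3) (Fin 3) ℂ, Pmat * (Pmat * (Y * Pmat)) * Pmat = Y := by
    intro Y
    simp only [← Matrix.mul_assoc]
    rw [hPP, one_mul, Matrix.mul_assoc, hPP, mul_one]
  have h1 : tauS (sigmaHat X) = -(Pmatᵀ * (X.map (starRingEnd ℂ))ᵀ * Pmatᵀ) := by
    rw [sigmaHat, hPinv, tauS, map_neg', Matrix.map_mul, Matrix.map_mul, hmap,
      ← Matrix.transpose_map]
  rw [sigmaHat, hPinv, h1, Matrix.transpose_neg, Matrix.transpose_mul, Matrix.transpose_mul,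
    Matrix.transpose_transpose, Matrix.transpose_transpose,
    Matrix.mul_neg, Matrix.neg_mul, neg_neg, tauS, key]
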